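/- Let ψ, ν ∈ Ψ and assume that ψ satisfies the Δ₂-type condition: there exists C ∈ (0,∞) with ψ(2p) ≤ C·ψ(p) for all p ≥ 2, and that lim_{p → ∞} ψ(p)/ν(p) = 0. Then every martingale (S_n, 𝓕_n) with sup_n ‖S_n‖_{G(ψ)} < ∞ converges almost surely to a random variable S and lim_{n → ∞} ‖S_n − S‖_{G(ν)} = 0. -/

import Mathlib

open MeasureTheory Filter Set
open scoped ENNReal Topology
open scoped NNReal

/-- `ψ` belongs to the class `Ψ`: `p ↦ p·log ψ(p)` is continuous, convex, increasing,
tends to `+∞`, and `ψ(p) → ∞` as `p → ∞`; `ψ` is positive on `[2,∞)`. -/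
structure PsiClass (ψ : ℝ → ℝ) : Prop where
  pos : ∀ p : ℝ, 2 ≤ p → 0 < ψ p
  cont : ContinuousOn (fun p => p * Real.log (ψ p)) (Set.Ici 2)
  convex : ConvexOn ℝ (Set.Ici 2) (fun p => p * Real.log (ψ p))
  mono : MonotoneOn (fun p => p * Real.log (ψ p)) (Set.Ici 2)
  tendsto_top : Filter.Tendsto (fun p => p * Real.log (ψ p)) Filter.atTop Filter.atTop
  psi_tendsto_top : Filter.Tendsto ψ Filter.atTop Filter.atTop

/-- The norm `‖η‖_{G(ψ)} = sup_{p ≥ 2} |η|_p / ψ(p)` (valued in `ℝ≥0∞`). -/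
noncomputable def Gnorm {Ω : Type*} [MeasurableSpace Ω] (μ : Measure Ω)
    (ψ : ℝ → ℝ) (η : Ω → ℝ) : ℝ≥0∞ :=
  ⨆ p : {p : ℝ // 2 ≤ p}, eLpNorm η (ENNReal.ofReal (p : ℝ)) μ / ENNReal.ofReal (ψ (p : ℝ))

lemma aux_unifIntegrable {Ω : Type*} [MeasurableSpace Ω] {μ : Measure Ω} [IsFiniteMeasure μ]
    {f : ℕ → Ω → ℝ} (hf : ∀ n, AEStronglyMeasurable (f n) μ)
    {p q : ℝ} (hp : 1 ≤ p) (hpq : p < q) {K : ℝ≥0∞} (hK : K ≠ ∞)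
    (hbdd : ∀ n, eLpNorm (f n) (ENNReal.ofReal q) μ ≤ K) :
    UniformIntegrable f (ENNReal.ofReal p) μ := by
  have hp0 : (0:ℝ) < p := lt_of_lt_of_le one_pos hp
  set r : ℝ := q / p with hr_def
  have hr1 : 1 < r := (one_lt_div hp0).2 hpq
  have hr0 : 0 < r := lt_trans one_pos hr1
  have hr1' : (0:ℝ) < r - 1 := by linarith
  refine uniformIntegrable_of (ENNReal.one_le_ofReal.2 hp) ENNReal.ofReal_ne_top hf ?_
  intro ε hε
  set B : ℝ≥0∞ := K ^ r with hB_def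
  have hB : B ≠ ∞ := ENNReal.rpow_ne_top_of_nonneg hr0.le hK
  have hεne : ENNReal.ofReal ε ≠ 0 := (ENNReal.ofReal_pos.2 hε).ne'
  set c0 : ℝ≥0∞ := (B / ENNReal.ofReal ε) ^ (r - 1)⁻¹ with hc0_def
  have hc0 : c0 ≠ ∞ :=
    ENNReal.rpow_ne_top_of_nonneg (by positivity) ((ENNReal.div_lt_top hB hεne).ne)
  set C : ℝ≥0 := c0.toNNReal + 1 with hC_def
  have hC1 : (1:ℝ≥0) ≤ C := le_add_self
  have hCpos : (0:ℝ) < (C:ℝ) := by exact_mod_cast lt_of_lt_of_le one_pos hC1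
  have hCne0 : (C:ℝ≥0∞) ≠ 0 := by exact_mod_cast (lt_of_lt_of_le one_pos hC1).ne'
  have hCnetop : (C:ℝ≥0∞) ≠ ∞ := ENNReal.coe_ne_top
  have hCc0 : c0 ≤ (C:ℝ≥0∞) := by
    rw [← ENNReal.coe_toNNReal hc0]
    have h5 : c0.toNNReal ≤ C := le_add_of_nonneg_right zero_le_one
    exact_mod_cast h5
  have hpow_ne0 : (C:ℝ≥0∞) ^ (r - 1) ≠ 0 :=
    (ENNReal.rpow_pos (lt_of_le_of_ne zero_le (Ne.symm hCne0)) hCnetop).ne'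
  have hpow_netop : (C:ℝ≥0∞) ^ (r - 1) ≠ ∞ :=
    ENNReal.rpow_ne_top_of_nonneg hr1'.le hCnetop
  have hkey : (C:ℝ≥0∞) ^ (1 - r) * B ≤ ENNReal.ofReal ε := by
    have h2 : B / ENNReal.ofReal ε ≤ (C:ℝ≥0∞) ^ (r - 1) := by
      calc B / ENNReal.ofReal ε = c0 ^ (r - 1) :=
            (ENNReal.rpow_inv_rpow (sub_ne_zero.2 hr1.ne') _).symm
        _ ≤ (C:ℝ≥0∞) ^ (r - 1) := ENNReal.rpow_le_rpow hCc0 hr1'.le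
    have h3 : B ≤ (C:ℝ≥0∞) ^ (r - 1) * ENNReal.ofReal ε :=
      (ENNReal.div_le_iff_le_mul (Or.inl hεne) (Or.inl ENNReal.ofReal_ne_top)).1 h2
    have h4 : B / ((C:ℝ≥0∞) ^ (r - 1)) ≤ ENNReal.ofReal ε :=
      (ENNReal.div_le_iff_le_mul (Or.inl hpow_ne0) (Or.inl hpow_netop)).2
        (by rwa [mul_comm] at h3)
    calc (C:ℝ≥0∞) ^ (1 - r) * B = B / ((C:ℝ≥0∞) ^ (r - 1)) := by
          rw [show (1 - r) = -(r-1) by ring, ENNReal.rpow_neg, mul_comm,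
            div_eq_mul_inv]
      _ ≤ ENNReal.ofReal ε := h4
  refine ⟨C, fun n => ?_⟩
  have hpt : ∀ x, ‖({x | C ≤ ‖f n x‖₊}).indicator (f n) x‖ ≤ (C:ℝ) ^ (1 - r) * ‖f n x‖ ^ r := by
    intro x
    by_cases hx : x ∈ {x | C ≤ ‖f n x‖₊}
    · rw [Set.indicator_of_mem hx]
      have hCx : (C:ℝ) ≤ ‖f n x‖ := by
        have := hx
        simp only [Set.mem_setOf_eq] at this
        calc (C:ℝ) ≤ (‖f n x‖₊ : ℝ) := by exact_mod_cast this
          _ = ‖f n x‖ := by simp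
      have hxpos : 0 < ‖f n x‖ := lt_of_lt_of_le hCpos hCx
      calc ‖f n x‖ = (C:ℝ) ^ (1 - r) * ((C:ℝ) ^ (r - 1) * ‖f n x‖) := by
            rw [← mul_assoc, ← Real.rpow_add hCpos]
            norm_num
        _ ≤ (C:ℝ) ^ (1 - r) * (‖f n x‖ ^ (r - 1) * ‖f n x‖) := by
            gcongr
        _ = (C:ℝ) ^ (1 - r) * ‖f n x‖ ^ r := by
            rw [← Real.rpow_add_one hxpos.ne' (r - 1)]
            norm_num
    · rw [Set.indicator_of_notMem hx]
      simp only [norm_zero]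
      positivity
  calc eLpNorm (({x | C ≤ ‖f n x‖₊}).indicator (f n)) (ENNReal.ofReal p) μ
      ≤ eLpNorm (fun x => (C:ℝ) ^ (1 - r) * ‖f n x‖ ^ r) (ENNReal.ofReal p) μ :=
        eLpNorm_mono fun x => le_trans (hpt x) (le_abs_self _)
    _ = ‖(C:ℝ) ^ (1 - r)‖₊ * eLpNorm (fun x => ‖f n x‖ ^ r) (ENNReal.ofReal p) μ := by
        have heq : ((C:ℝ) ^ (1 - r)) • (fun x => ‖f n x‖ ^ r)
            = fun x => (C:ℝ) ^ (1 - r) * ‖f n x‖ ^ r := rfl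
        rw [← heq, eLpNorm_const_smul, enorm_eq_nnnorm]
    _ = ‖(C:ℝ) ^ (1 - r)‖₊ * eLpNorm (f n) (ENNReal.ofReal p * ENNReal.ofReal r) μ ^ r := by
        rw [eLpNorm_norm_rpow (f n) hr0]
    _ = (C:ℝ≥0∞) ^ (1 - r) * eLpNorm (f n) (ENNReal.ofReal q) μ ^ r := by
        congr 1
        · rw [← enorm_eq_nnnorm, Real.enorm_eq_ofReal (by positivity), ← ENNReal.ofReal_rpow_of_pos hCpos,
            ENNReal.ofReal_coe_nnreal]
        · rw [← ENNReal.ofReal_mul hp0.le]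
          congr 2
          rw [hr_def, mul_comm, div_mul_cancel₀ _ hp0.ne']
    _ ≤ (C:ℝ≥0∞) ^ (1 - r) * B := by
        rw [hB_def]
        exact mul_le_mul_right (ENNReal.rpow_le_rpow (hbdd n) hr0.le) _
    _ ≤ ENNReal.ofReal ε := hkey

theorem stmt16 {Ω : Type*} [m0 : MeasurableSpace Ω] (μ : Measure Ω) [IsProbabilityMeasure μ]
    (ψ ν : ℝ → ℝ) (hψ : PsiClass ψ) (hν : PsiClass ν)
    (hΔ2 : ∃ C : ℝ, 0 < C ∧ ∀ p : ℝ, 2 ≤ p → ψ (2 * p) ≤ C * ψ p)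
    (hlim : Filter.Tendsto (fun p => ψ p / ν p) Filter.atTop (𝓝 0))
    (ℱ : Filtration ℕ m0) (S : ℕ → Ω → ℝ) (hmart : Martingale S ℱ μ)
    (hbdd : (⨆ n : ℕ, Gnorm μ ψ (S n)) < ⊤) :
    ∃ Slim : Ω → ℝ,
      (∀ᵐ ω ∂μ, Filter.Tendsto (fun n => S n ω) Filter.atTop (𝓝 (Slim ω))) ∧
      Filter.Tendsto (fun n => Gnorm μ ν (fun ω => S n ω - Slim ω)) Filter.atTop (𝓝 0) := by
  classical
  set M : ℝ≥0∞ := ⨆ n : ℕ, Gnorm μ ψ (S n) with hM_def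
  have hMne : M ≠ ⊤ := hbdd.ne
  have hSM : ∀ n, AEStronglyMeasurable (S n) μ :=
    fun n => ((hmart.stronglyAdapted n).mono (ℱ.le n)).aestronglyMeasurable
  have hnorm : ∀ (n : ℕ) (p : ℝ), 2 ≤ p →
      eLpNorm (S n) (ENNReal.ofReal p) μ ≤ M * ENNReal.ofReal (ψ p) := by
    intro n p hp
    have h1 : eLpNorm (S n) (ENNReal.ofReal p) μ / ENNReal.ofReal (ψ p) ≤ M := by
      refine le_trans ?_ (le_iSup (fun n => Gnorm μ ψ (S n)) n)
      exact le_iSup (fun q : {p : ℝ // 2 ≤ p} =>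
        eLpNorm (S n) (ENNReal.ofReal (q : ℝ)) μ / ENNReal.ofReal (ψ (q : ℝ))) ⟨p, hp⟩
    have hψp : ENNReal.ofReal (ψ p) ≠ 0 := (ENNReal.ofReal_pos.2 (hψ.pos p hp)).ne'
    exact (ENNReal.div_le_iff_le_mul (Or.inl hψp) (Or.inl ENNReal.ofReal_ne_top)).1 h1
  have hKne : ∀ p : ℝ, M * ENNReal.ofReal (ψ p) ≠ ⊤ :=
    fun p => ENNReal.mul_ne_top hMne ENNReal.ofReal_ne_top
  set R : ℝ≥0 := (M * ENNReal.ofReal (ψ 2)).toNNReal with hR_def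
  have h1bdd : ∀ n, eLpNorm (S n) 1 μ ≤ (R : ℝ≥0∞) := by
    intro n
    rw [hR_def, ENNReal.coe_toNNReal (hKne 2)]
    refine le_trans (eLpNorm_le_eLpNorm_of_exponent_le ?_ (hSM n)) (hnorm n 2 le_rfl)
    exact ENNReal.one_le_ofReal.2 one_le_two
  set Slim : Ω → ℝ := ℱ.limitProcess S μ with hSlim_def
  have hae : ∀ᵐ ω ∂μ, Tendsto (fun n => S n ω) atTop (𝓝 (Slim ω)) :=
    hmart.submartingale.ae_tendsto_limitProcess h1bdd
  have hSlimSM : AEStronglyMeasurable Slim μ :=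
    Filtration.stronglyMeasurable_limit_process'.aestronglyMeasurable
  have hSlimbdd : ∀ p : ℝ, 2 ≤ p →
      eLpNorm Slim (ENNReal.ofReal p) μ ≤ M * ENNReal.ofReal (ψ p) := by
    intro p hp
    refine le_trans (Lp.eLpNorm_lim_le_liminf_eLpNorm hSM Slim hae) ?_
    exact liminf_le_of_frequently_le' (Frequently.of_forall fun n => hnorm n p hp)
  set B : ℝ≥0∞ := 2 * M + 1 with hB_def
  have hBne : B ≠ ⊤ := by
    rw [hB_def]
    exact ENNReal.add_ne_top.2 ⟨ENNReal.mul_ne_top (by simp) hMne, ENNReal.one_ne_top⟩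
  have hBne0 : B ≠ 0 := by
    rw [hB_def]
    exact (lt_of_lt_of_le zero_lt_one le_add_self).ne'
  have hTbdd : ∀ (n : ℕ) (p : ℝ), 2 ≤ p →
      eLpNorm (fun ω => S n ω - Slim ω) (ENNReal.ofReal p) μ ≤ B * ENNReal.ofReal (ψ p) := by
    intro n p hp
    have h1le : (1 : ℝ≥0∞) ≤ ENNReal.ofReal p := ENNReal.one_le_ofReal.2 (by linarith)
    calc eLpNorm (fun ω => S n ω - Slim ω) (ENNReal.ofReal p) μ
        = eLpNorm (S n - Slim) (ENNReal.ofReal p) μ := rfl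
      _ ≤ eLpNorm (S n) (ENNReal.ofReal p) μ + eLpNorm Slim (ENNReal.ofReal p) μ :=
          eLpNorm_sub_le (hSM n) hSlimSM h1le
      _ ≤ M * ENNReal.ofReal (ψ p) + M * ENNReal.ofReal (ψ p) :=
          add_le_add (hnorm n p hp) (hSlimbdd p hp)
      _ ≤ B * ENNReal.ofReal (ψ p) := by
          rw [← two_mul, ← mul_assoc]
          exact mul_le_mul_left le_self_add _
  refine ⟨Slim, hae, ?_⟩
  rw [ENNReal.tendsto_nhds_zero]
  intro ε hε
  set ε₁ : ℝ≥0∞ := min ε 1 with hε₁_def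
  have hε₁pos : 0 < ε₁ := lt_min hε zero_lt_one
  have hε₁top : ε₁ ≠ ⊤ := ((min_le_right ε 1).trans_lt ENNReal.one_lt_top).ne
  have hε₁le : ε₁ ≤ ε := min_le_left _ _
  set δ : ℝ := (ε₁ / B).toReal with hδ_def
  have hdivne : ε₁ / B ≠ ⊤ := (ENNReal.div_lt_top hε₁top hBne0).ne
  have hδpos : 0 < δ := ENNReal.toReal_pos (ENNReal.div_pos hε₁pos.ne' hBne).ne' hdivne
  have hδ : B * ENNReal.ofReal δ ≤ ε₁ := by
    rw [hδ_def, ENNReal.ofReal_toReal hdivne]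
    exact ENNReal.mul_div_le
  obtain ⟨P₀, hP₀⟩ := eventually_atTop.1 (hlim.eventually_lt_const hδpos)
  set P : ℝ := max P₀ 2 with hP_def
  have hP2 : (2 : ℝ) ≤ P := le_max_right _ _
  have hνcont : ContinuousOn ν (Icc 2 P) := by
    have h1 : ContinuousOn (fun p => Real.exp ((p * Real.log (ν p)) / p)) (Ici 2) :=
      Real.continuous_exp.comp_continuousOn
        (hν.cont.div continuousOn_id (fun x hx => by
          have : (2:ℝ) ≤ x := hx
          positivity))
    refine (h1.congr ?_).mono Icc_subset_Ici_self
    intro p hp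
    have hp2 : (2:ℝ) ≤ p := hp
    have hpne : p ≠ 0 := by positivity
    show ν p = Real.exp (p * Real.log (ν p) / p)
    rw [mul_comm p (Real.log (ν p)), mul_div_assoc, div_self hpne, mul_one,
      Real.exp_log (hν.pos p hp2)]
  obtain ⟨p₀, hp₀mem, hp₀min⟩ := isCompact_Icc.exists_isMinOn (nonempty_Icc.2 hP2) hνcont
  have hcpos : 0 < ν p₀ := hν.pos p₀ hp₀mem.1
  have hUI : UnifIntegrable S (ENNReal.ofReal P) μ :=
    (aux_unifIntegrable hSM (by linarith : (1:ℝ) ≤ P) (by linarith : P < 2 * P)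
      (hKne (2 * P)) (fun n => hnorm n (2 * P) (by linarith))).2.1
  have hSlimMem : MemLp Slim (ENNReal.ofReal P) μ :=
    ⟨hSlimSM, lt_top_iff_ne_top.2 fun h => (hKne P) (top_le_iff.1 (h ▸ hSlimbdd P hP2))⟩
  have hLP : Tendsto (fun n => eLpNorm (S n - Slim) (ENNReal.ofReal P) μ) atTop (𝓝 0) :=
    tendsto_Lp_finite_of_tendsto_ae (ENNReal.one_le_ofReal.2 (by linarith))
      ENNReal.ofReal_ne_top hSM hSlimMem hUI hae
  have hcε : (0 : ℝ≥0∞) < ENNReal.ofReal (ν p₀) * ε₁ :=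
    ENNReal.mul_pos (ENNReal.ofReal_pos.2 hcpos).ne' hε₁pos.ne'
  filter_upwards [ENNReal.tendsto_nhds_zero.1 hLP _ hcε] with n hn
  refine le_trans (iSup_le ?_) hε₁le
  rintro ⟨p, hp⟩
  have hνne : ENNReal.ofReal (ν p) ≠ 0 := (ENNReal.ofReal_pos.2 (hν.pos p hp)).ne'
  rw [ENNReal.div_le_iff_le_mul (Or.inl hνne) (Or.inl ENNReal.ofReal_ne_top)]
  by_cases hpP : p ≤ P
  · have hcν : ν p₀ ≤ ν p := hp₀min ⟨hp, hpP⟩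
    calc eLpNorm (fun ω => S n ω - Slim ω) (ENNReal.ofReal p) μ
        ≤ eLpNorm (S n - Slim) (ENNReal.ofReal P) μ :=
          eLpNorm_le_eLpNorm_of_exponent_le (ENNReal.ofReal_le_ofReal hpP) ((hSM n).sub hSlimSM)
      _ ≤ ENNReal.ofReal (ν p₀) * ε₁ := hn
      _ ≤ ε₁ * ENNReal.ofReal (ν p) := by
          rw [mul_comm]
          exact mul_le_mul_right (ENNReal.ofReal_le_ofReal hcν) _
  · push_neg at hpP
    have hpP₀ : P₀ ≤ p := le_trans (le_max_left _ _) hpP.le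
    have hψν : ψ p / ν p < δ := hP₀ p hpP₀
    have hψle : ψ p ≤ δ * ν p := ((div_lt_iff₀ (hν.pos p hp)).1 hψν).le
    calc eLpNorm (fun ω => S n ω - Slim ω) (ENNReal.ofReal p) μ
        ≤ B * ENNReal.ofReal (ψ p) := hTbdd n p hp
      _ ≤ B * (ENNReal.ofReal δ * ENNReal.ofReal (ν p)) := by
          refine mul_le_mul_right ?_ _
          rw [← ENNReal.ofReal_mul hδpos.le]
          exact ENNReal.ofReal_le_ofReal hψle
      _ = (B * ENNReal.ofReal δ) * ENNReal.ofReal (ν p) := (mul_assoc _ _ _).symm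
      _ ≤ ε₁ * ENNReal.ofReal (ν p) := mul_le_mul_left hδ _
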